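/- arXiv:2009.12869 — 2 statements merged into one kernel-verified Lean document; each statement's English description precedes it below -/
import Mathlib

section
/- Let Q₁ = Aff(A₁, f₁) and Q₂ = Aff(A₂, f₂) be affine quandles over Λ-modules M₁ and M₂ (where t acts by f_i). A map h : Q₁ → Q₂ with h(0) = b is a quandle homomorphism if and only if h(x) = g(x) + b for some Λ-module homomorphism g : M₁ → M₂. (In particular, for any Λ-module homomorphism g and any b, the map x ↦ g(x) + b is a quandle homomorphism.) -/
open LaurentPolynomial

/-- For connected affine quandles Aff(M₁, t), Aff(M₂, t) over
Λ = ℤ[t,t⁻¹], a map h : M₁ → M₂ is a quandle homomorphism iff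
h(x) = g(x) + h(0) for some Λ-module homomorphism g. -/
theorem stmt_11 {M₁ M₂ : Type*} [AddCommGroup M₁] [AddCommGroup M₂]
    [Module (LaurentPolynomial ℤ) M₁] [Module (LaurentPolynomial ℤ) M₂]
    (hconn₁ : ∀ m : M₁, ∃ u : M₁, m = (1 - T 1 : LaurentPolynomial ℤ) • u)
    (hconn₂ : ∀ m : M₂, ∃ u : M₂, m = (1 - T 1 : LaurentPolynomial ℤ) • u)
    (h : M₁ → M₂) :
    (∀ x y : M₁,
      h ((T 1 : LaurentPolynomial ℤ) • x + (1 - T 1 : LaurentPolynomial ℤ) • y)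
        = (T 1 : LaurentPolynomial ℤ) • h x +
          (1 - T 1 : LaurentPolynomial ℤ) • h y) ↔
    ∃ g : M₁ →ₗ[LaurentPolynomial ℤ] M₂, ∀ x : M₁, h x = g x + h 0 := by
  constructor
  · intro hh
    have key1 : ∀ x : M₁, h ((T 1 : LaurentPolynomial ℤ) • x)
        = (T 1 : LaurentPolynomial ℤ) • h x + (1 - T 1 : LaurentPolynomial ℤ) • h 0 := by
      intro x; simpa using hh x 0
    have key2 : ∀ y : M₁, h ((1 - T 1 : LaurentPolynomial ℤ) • y)
        = (T 1 : LaurentPolynomial ℤ) • h 0 + (1 - T 1 : LaurentPolynomial ℤ) • h y := by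
      intro y; simpa using hh 0 y
    have Tinv : ∀ x : M₁,
        (T 1 : LaurentPolynomial ℤ) • (T (-1) : LaurentPolynomial ℤ) • x = x := by
      intro x
      rw [smul_smul, ← T_add]
      norm_num [T_zero]
    have Tinv' : ∀ x : M₁,
        (T (-1) : LaurentPolynomial ℤ) • (T 1 : LaurentPolynomial ℤ) • x = x := by
      intro x
      rw [smul_smul, ← T_add]
      norm_num [T_zero]
    set g0 : M₁ → M₂ := fun x => h x - h 0 with hg0
    have hadd : ∀ a b : M₁, g0 (a + b) = g0 a + g0 b := by
      intro a b
      obtain ⟨y, hy⟩ := hconn₁ b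
      have ha : a = (T 1 : LaurentPolynomial ℤ) • (T (-1) : LaurentPolynomial ℤ) • a :=
        (Tinv a).symm
      calc g0 (a + b)
          = h ((T 1 : LaurentPolynomial ℤ) • ((T (-1) : LaurentPolynomial ℤ) • a)
              + (1 - T 1 : LaurentPolynomial ℤ) • y) - h 0 := by rw [← hy, ← ha]
        _ = ((T 1 : LaurentPolynomial ℤ) • h ((T (-1) : LaurentPolynomial ℤ) • a)
              + (1 - T 1 : LaurentPolynomial ℤ) • h y) - h 0 := by rw [hh]
        _ = g0 a + g0 b := by
            have ea : h a = (T 1 : LaurentPolynomial ℤ) • h ((T (-1) : LaurentPolynomial ℤ) • a)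
                + (1 - T 1 : LaurentPolynomial ℤ) • h 0 := by
              conv_lhs => rw [ha]
              rw [key1]
            have eb : h b = (T 1 : LaurentPolynomial ℤ) • h 0
                + (1 - T 1 : LaurentPolynomial ℤ) • h y := by
              rw [hy, key2]
            rw [hg0]
            simp only
            rw [ea, eb]
            module
    have hT1 : ∀ x : M₁, g0 ((T 1 : LaurentPolynomial ℤ) • x)
        = (T 1 : LaurentPolynomial ℤ) • g0 x := by
      intro x
      rw [hg0]; simp only
      rw [key1]
      module
    have hTn : ∀ n : ℤ, ∀ x : M₁, g0 ((T n : LaurentPolynomial ℤ) • x)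
        = (T n : LaurentPolynomial ℤ) • g0 x := by
      intro n
      induction n using Int.induction_on with
      | zero => intro x; simp [T_zero]
      | succ k ih =>
          intro x
          have : ((k : ℤ) + 1) = (1 : ℤ) + k := by ring
          rw [this, T_add, ← smul_smul, hT1, ih, smul_smul, ← T_add]
      | pred k ih =>
          intro x
          have Tinv₂' : ∀ z : M₂,
              (T (-1) : LaurentPolynomial ℤ) • (T 1 : LaurentPolynomial ℤ) • z = z := by
            intro z
            rw [smul_smul, ← T_add]
            norm_num [T_zero]
          have e1 : (T 1 : LaurentPolynomial ℤ) • (T (-(k:ℤ)-1) : LaurentPolynomial ℤ) • x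
              = (T (-(k:ℤ)) : LaurentPolynomial ℤ) • x := by
            rw [smul_smul, ← T_add]
            norm_num
          have e2 := hT1 ((T (-(k:ℤ)-1) : LaurentPolynomial ℤ) • x)
          rw [e1, ih] at e2
          have e3 := congrArg (fun z => (T (-1) : LaurentPolynomial ℤ) • z) e2
          rw [Tinv₂'] at e3
          rw [← e3, smul_smul, ← T_add]
          congr 2
          ring
    -- g0 as an AddMonoidHom to get ℤ-linearity
    have hzero : g0 0 = 0 := by simp [hg0]
    let G : M₁ →+ M₂ := AddMonoidHom.mk' g0 hadd
    have hzsmul : ∀ (a : ℤ) (x : M₁), g0 (a • x) = a • g0 x := by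
      intro a x
      exact map_zsmul G a x
    have hsmul : ∀ (c : LaurentPolynomial ℤ) (x : M₁), g0 (c • x) = c • g0 x := by
      intro c x
      induction c using LaurentPolynomial.induction_on' with
      | add p q hp hq => rw [add_smul, hadd, hp, hq, add_smul]
      | C_mul_T n a =>
          have hC : (LaurentPolynomial.C (a : ℤ) : LaurentPolynomial ℤ) = (a : LaurentPolynomial ℤ) := by
            simp [map_intCast]
          rw [mul_smul, mul_smul, hC, Int.cast_smul_eq_zsmul, Int.cast_smul_eq_zsmul,
            hzsmul, hTn]
    refine ⟨{ toFun := g0, map_add' := hadd, map_smul' := fun c x => hsmul c x }, ?_⟩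
    intro x
    show h x = (h x - h 0) + h 0
    abel
  · rintro ⟨g, hg⟩ x y
    rw [hg ((T 1 : LaurentPolynomial ℤ) • x + (1 - T 1 : LaurentPolynomial ℤ) • y),
      hg x, hg y, map_add, map_smul, map_smul]
    module
end

section
/- Let (X, H) be an augmented quandle with augmentation ε₀ : X → H, ι : H → G an injective group homomorphism, and let ∼ on X × G be the equivalence relation (x, ι(b)g) ∼ (x·b, g). Then the pair ((X × G)/∼, G), with G acting on the second coordinate by right multiplication and augmentation ε[x, g] = g^{-1} ι(ε₀(x)) g, is an augmented quandle: it satisfies [x,g]^{ε[x,g]} = [x,g] and ε([x,g]^h) = h^{-1} ε[x,g] h. -/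
/-- The equivalence relation on X × G from the satellite knot decomposition:
(x, g) ∼ (y, h) iff ∃ b ∈ H, g = ι(b) h and y = x·b. -/
def satRel {X H G : Type*} [Group H] [Group G] (act : X → H → X) (ι : H →* G) :
    X × G → X × G → Prop :=
  fun p q => ∃ b : H, p.2 = ι b * q.2 ∧ q.1 = act p.1 b

/-- For an augmented quandle (X, H) with augmentation ε₀ and an
injective group homomorphism ι : H → G, the quotient (X × G)/∼ with the right
G-action on the second coordinate and augmentation ε[x,g] = g⁻¹ ι(ε₀(x)) g is
an augmented quandle. -/
theorem stmt_14 {X H G : Type*} [Group H] [Group G]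
    (act : X → H → X)
    (act_one : ∀ x, act x 1 = x)
    (act_mul : ∀ x a b, act (act x a) b = act x (a * b))
    (ε₀ : X → H)
    (aug1 : ∀ x, act x (ε₀ x) = x)
    (aug2 : ∀ x b, ε₀ (act x b) = b⁻¹ * ε₀ x * b)
    (ι : H →* G) (hι : Function.Injective ι) :
    ∃ (actG : Quot (satRel act ι) → G → Quot (satRel act ι))
      (ε : Quot (satRel act ι) → G),
      (∀ (x : X) (g k : G),
        actG (Quot.mk _ (x, g)) k = Quot.mk _ (x, g * k)) ∧
      (∀ (x : X) (g : G), ε (Quot.mk _ (x, g)) = g⁻¹ * ι (ε₀ x) * g) ∧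
      (∀ q, actG q 1 = q) ∧
      (∀ q a b, actG (actG q a) b = actG q (a * b)) ∧
      (∀ q, actG q (ε q) = q) ∧
      (∀ q k, ε (actG q k) = k⁻¹ * ε q * k) := by
  refine ⟨fun q k => Quot.lift (fun p => Quot.mk _ (p.1, p.2 * k)) ?_ q,
    Quot.lift (fun p => p.2⁻¹ * ι (ε₀ p.1) * p.2) ?_, ?_, ?_, ?_, ?_, ?_, ?_⟩
  · rintro p q ⟨b, h1, h2⟩
    exact Quot.sound ⟨b, by simp [h1, mul_assoc], by simp [h2]⟩
  · rintro p q ⟨b, h1, h2⟩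
    simp [h1, h2, aug2, mul_assoc]
  · intro x g k; rfl
  · intro x g; rfl
  · rintro ⟨⟨x, g⟩⟩; simp
  · rintro ⟨⟨x, g⟩⟩ a b; simp [mul_assoc]
  · rintro ⟨⟨x, g⟩⟩
    show Quot.mk _ (x, g * (g⁻¹ * ι (ε₀ x) * g)) = Quot.mk _ (x, g)
    have : g * (g⁻¹ * ι (ε₀ x) * g) = ι (ε₀ x) * g := by group
    rw [this]
    exact Quot.sound ⟨ε₀ x, rfl, (aug1 x).symm⟩
  · rintro ⟨⟨x, g⟩⟩ k
    show (g * k)⁻¹ * ι (ε₀ x) * (g * k) = k⁻¹ * (g⁻¹ * ι (ε₀ x) * g) * k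
    group
end
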